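/- Let K ⊂ ℝⁿ be an n-dimensional convex polyhedron with minimal presentation {H₁,…,H_m}, such that K ⊂ {x_{n−1} ≤ 0}, H₁ = {x_{n−1} = 0}, and for each a ∈ ℝ^{n−1} the set K ∩ πₙ^{-1}(a,0) is bounded, where πₙ(x₁,…,xₙ) = (x₁,…,x_{n−1},0). Then the convex polyhedron K₁ := ⋂_{j=2}^m H_j⁺ also satisfies that K₁ ∩ πₙ^{-1}(a,0) is bounded for every a ∈ ℝ^{n−1}. -/

import Mathlib

/-- Removing the facet contained in {x_{n−1} = 0} from a polyhedron K ⊂ {x_{n−1} ≤ 0}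
with bounded fibers parallel to eₙ yields a polyhedron with bounded fibers.
Coordinates in ℝ^{n+2}: x_{n−1} is index n (penultimate), xₙ the last. -/
theorem stmt_14 (n m : ℕ) (u : Fin (m + 1) → Fin (n + 2) → ℝ) (c : Fin (m + 1) → ℝ)
    (K : Set (Fin (n + 2) → ℝ))
    (hK : K = {x | ∀ i, ∑ j, u i j * x j ≤ c i})
    (hdim : (interior K).Nonempty)
    (hmin : ∀ i, {x : Fin (n + 2) → ℝ | ∀ k, k ≠ i → ∑ j, u k j * x j ≤ c k} ≠ K)
    (h0 : u 0 = Pi.single ⟨n, by omega⟩ 1) (hc0 : c 0 = 0)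
    (hsub : K ⊆ {x | x ⟨n, by omega⟩ ≤ 0})
    (hbdd : ∀ a : Fin (n + 1) → ℝ, Bornology.IsBounded {t : ℝ | Fin.snoc a t ∈ K}) :
    ∀ a : Fin (n + 1) → ℝ,
      Bornology.IsBounded
        {t : ℝ | ∀ i, i ≠ 0 → ∑ j, u i j * (Fin.snoc a t : Fin (n + 2) → ℝ) j ≤ c i} := by
  set L : Fin (n + 2) := Fin.last (n + 1) with hLdef
  have hsum : ∀ (i : Fin (m + 1)) (b : Fin (n + 1) → ℝ) (t : ℝ),
      ∑ j, u i j * (Fin.snoc b t : Fin (n + 2) → ℝ) j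
        = (∑ j : Fin (n + 1), u i j.castSucc * b j) + u i L * t := by
    intro i b t
    rw [Fin.sum_univ_castSucc]
    simp [hLdef]
  -- u 0 L = 0
  have hu0L : u 0 L = 0 := by
    rw [h0]
    apply Pi.single_eq_of_ne
    simp [hLdef, Fin.ext_iff]
  -- a point of K
  obtain ⟨x, hx⟩ := hdim
  have hxK : x ∈ K := interior_subset hx
  set a₀ : Fin (n + 1) → ℝ := Fin.init x with ha₀
  set t₀ : ℝ := x L with ht₀def
  have hx' : (Fin.snoc a₀ t₀ : Fin (n + 2) → ℝ) = x := Fin.snoc_init_self x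
  have hmem : ∀ (b : Fin (n + 1) → ℝ) (t : ℝ),
      (Fin.snoc b t : Fin (n + 2) → ℝ) ∈ K ↔
        ∀ i, (∑ j : Fin (n + 1), u i j.castSucc * b j) + u i L * t ≤ c i := by
    intro b t
    rw [hK]
    simp only [Set.mem_setOf_eq, hsum]
  have ht₀ : ∀ i, (∑ j : Fin (n + 1), u i j.castSucc * a₀ j) + u i L * t₀ ≤ c i := by
    rw [← hmem, hx']; exact hxK
  -- there is a constraint with positive last coefficient
  have hpos : ∃ i, 0 < u i L := by
    by_contra h
    push_neg at h
    have hsubIci : Set.Ici t₀ ⊆ {t : ℝ | Fin.snoc a₀ t ∈ K} := by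
      intro s hs
      rw [Set.mem_setOf_eq, hmem]
      intro i
      have h1 := ht₀ i
      have h2 : u i L * s ≤ u i L * t₀ :=
        mul_le_mul_of_nonpos_left hs (h i)
      linarith
    have := ((hbdd a₀).subset hsubIci).bddAbove
    exact absurd (this.mono Set.Subset.rfl) (by
      rw [not_bddAbove_iff] at *
      · intro y
        exact ⟨max y t₀ + 1, ⟨le_trans (le_max_right y t₀) (by linarith), by
          exact lt_of_le_of_lt (le_max_left y t₀) (by linarith)⟩⟩)
  -- there is a constraint with negative last coefficient
  have hneg : ∃ k, u k L < 0 := by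
    by_contra h
    push_neg at h
    have hsubIic : Set.Iic t₀ ⊆ {t : ℝ | Fin.snoc a₀ t ∈ K} := by
      intro s hs
      rw [Set.mem_setOf_eq, hmem]
      intro i
      have h1 := ht₀ i
      have h2 : u i L * s ≤ u i L * t₀ := mul_le_mul_of_nonneg_left hs (h i)
      linarith
    have := ((hbdd a₀).subset hsubIic).bddBelow
    rw [bddBelow_def] at this
    obtain ⟨y, hy⟩ := this
    have h3 := hy (min y t₀ - 1) (Set.mem_Iic.mpr (by linarith [min_le_right y t₀]))
    linarith [min_le_left y t₀]
  obtain ⟨i, hi⟩ := hpos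
  obtain ⟨k, hk⟩ := hneg
  have hi0 : i ≠ 0 := by rintro rfl; rw [hu0L] at hi; exact lt_irrefl 0 hi
  have hk0 : k ≠ 0 := by rintro rfl; rw [hu0L] at hk; exact lt_irrefl 0 hk
  intro a
  set αi : ℝ := ∑ j : Fin (n + 1), u i j.castSucc * a j with hαi
  set αk : ℝ := ∑ j : Fin (n + 1), u k j.castSucc * a j with hαk
  apply (Metric.isBounded_Icc ((c k - αk) / u k L) ((c i - αi) / u i L)).subset
  intro t ht
  simp only [Set.mem_setOf_eq] at ht
  have hti := ht i hi0
  have htk := ht k hk0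
  rw [hsum] at hti htk
  constructor
  · rw [div_le_iff_of_neg hk]
    linarith
  · rw [le_div_iff₀ hi]
    linarith
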